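/- Let p be a prime, let r, m, e be positive integers with e ≥ 2, let α = (a_1,…,a_m) be an m-tuple of natural numbers, and let d_{e−1},…,d_1 be integers; set d_0 := 0. Then the following are equivalent: (i) a_1+⋯+a_m = r(p^e−1) and d_i(α) = d_i for every 1 ≤ i ≤ e−1; (ii) ⌊a_1/p^{e−1}⌋ + ⋯ + ⌊a_m/p^{e−1}⌋ = r(p−1) − d_{e−1}, and for every 0 ≤ i ≤ e−2 the sum of the i-th base-p digits of a_1,…,a_m (that is, (⌊a_1/p^i⌋ mod p) + ⋯ + (⌊a_m/p^i⌋ mod p)) equals r(p−1) + d_{i+1}·p − d_i (equalities of integers). -/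

import Mathlib

/-- `dArr p r a i` is the integer `d_i(α) = ⌊((a_1 mod p^i)+⋯+(a_m mod p^i))/p^i⌋ − ⌊r(p^i−1)/p^i⌋`
for `α = (a_1,…,a_m)`. -/
def dArr (p r : ℕ) {m : ℕ} (a : Fin m → ℕ) (i : ℕ) : ℤ :=
  (((∑ j, a j % p ^ i) / p ^ i : ℕ) : ℤ) - (((r * (p ^ i - 1)) / p ^ i : ℕ) : ℤ)

private lemma key1 (q t r : ℕ) (hq : 0 < q) (ht : 0 < t) :
    r * (q * t - 1) / q = r * (t - 1) + r * (q - 1) / q := by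
  obtain ⟨t', rfl⟩ : ∃ t', t = t' + 1 := ⟨t - 1, by omega⟩
  have h1 : q * (t' + 1) = q * t' + q := by ring
  have h : q * (t' + 1) - 1 = q - 1 + q * t' := by omega
  have h2 : r * (q - 1 + q * t') = q * (r * t') + r * (q - 1) := by ring
  rw [h, h2, Nat.mul_add_div hq]
  simp [Nat.add_comm]

/-- the carry-over data `d_i(α)` of an `m`-tuple summing to `r(p^e−1)`
is characterized by the digit-sum equations. -/
theorem stmt_5 (p r m e : ℕ) (hp : p.Prime) (hr : 0 < r) (hm : 0 < m)
    (he : 2 ≤ e) (a : Fin m → ℕ) (d : ℕ → ℤ) (hd0 : d 0 = 0) :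
    ((∑ j, a j = r * (p ^ e - 1)) ∧
        ∀ i, 1 ≤ i → i ≤ e - 1 → dArr p r a i = d i) ↔
    (((∑ j, a j / p ^ (e - 1) : ℕ) : ℤ) = (r : ℤ) * (p - 1) - d (e - 1) ∧
      ∀ i, i ≤ e - 2 →
        ((∑ j, (a j / p ^ i) % p : ℕ) : ℤ) =
          (r : ℤ) * (p - 1) + d (i + 1) * p - d i) := by
  have hp2 : 2 ≤ p := hp.two_le
  have hp0 : 0 < p := by omega
  -- S = p^i * A i + s i
  have hA : ∀ i : ℕ, ∑ j, a j = p ^ i * (∑ j, a j / p ^ i) + ∑ j, a j % p ^ i := by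
    intro i
    rw [Finset.mul_sum, ← Finset.sum_add_distrib]
    exact Finset.sum_congr rfl fun j _ => (Nat.div_add_mod (a j) (p ^ i)).symm
  have hdiv : ∀ i : ℕ, (∑ j, a j) / p ^ i = (∑ j, a j / p ^ i) + (∑ j, a j % p ^ i) / p ^ i := by
    intro i
    conv_lhs => rw [hA i]
    rw [Nat.mul_add_div (pow_pos hp0 i)]
  -- A i = p * A (i+1) + c i, in ℤ
  have hrecZ : ∀ i : ℕ, ((∑ j, a j / p ^ i : ℕ) : ℤ) =
      (p : ℤ) * ((∑ j, a j / p ^ (i + 1) : ℕ) : ℤ) + ((∑ j, (a j / p ^ i) % p : ℕ) : ℤ) := by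
    intro i
    have h : (∑ j, a j / p ^ i) = p * (∑ j, a j / p ^ (i + 1)) + ∑ j, (a j / p ^ i) % p := by
      rw [Finset.mul_sum, ← Finset.sum_add_distrib]
      refine Finset.sum_congr rfl fun j _ => ?_
      rw [pow_succ, ← Nat.div_div_eq_div_mul]
      exact (Nat.div_add_mod (a j / p ^ i) p).symm
    rw [h]; push_cast; ring
  -- dArr formula under the sum hypothesis
  have hdArr : (∑ j, a j = r * (p ^ e - 1)) → ∀ i ≤ e,
      dArr p r a i = (r : ℤ) * ((p : ℤ) ^ (e - i) - 1) - ((∑ j, a j / p ^ i : ℕ) : ℤ) := by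
    intro hS i hi
    have hq : 0 < p ^ i := pow_pos hp0 i
    have hqt : p ^ i * p ^ (e - i) = p ^ e := by rw [← pow_add]; congr 1; omega
    have ht : 0 < p ^ (e - i) := pow_pos hp0 _
    have h1 : (∑ j, a j) / p ^ i = r * (p ^ (e - i) - 1) + r * (p ^ i - 1) / p ^ i := by
      rw [hS, ← hqt]; exact key1 _ _ _ hq ht
    have h2 := hdiv i
    rw [h1] at h2
    -- h2 : r * (p ^ (e - i) - 1) + r * (p^i-1)/p^i = A i + s i / p^i
    have h3 : ((r * (p ^ (e - i) - 1) : ℕ) : ℤ) = (r : ℤ) * ((p : ℤ) ^ (e - i) - 1) := by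
      have : 1 ≤ p ^ (e - i) := ht
      push_cast [Nat.cast_sub this]
      ring
    unfold dArr
    have h4 : ((r * (p ^ (e - i) - 1) : ℕ) : ℤ) + ((r * (p ^ i - 1) / p ^ i : ℕ) : ℤ) =
        ((∑ j, a j / p ^ i : ℕ) : ℤ) + (((∑ j, a j % p ^ i) / p ^ i : ℕ) : ℤ) := by
      exact_mod_cast congrArg (Nat.cast : ℕ → ℤ) h2
    rw [h3] at h4
    linarith
  constructor
  · rintro ⟨hS, hd⟩
    -- A i = r (p^(e-i) - 1) - d i for i ≤ e - 1
    have hF : ∀ i ≤ e - 1, ((∑ j, a j / p ^ i : ℕ) : ℤ) =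
        (r : ℤ) * ((p : ℤ) ^ (e - i) - 1) - d i := by
      intro i hi
      rcases Nat.eq_zero_or_pos i with rfl | hi1
      · rw [hd0]
        simp only [pow_zero, Nat.div_one, Nat.sub_zero, sub_zero]
        rw [hS]
        have : 1 ≤ p ^ e := Nat.one_le_pow _ _ hp0
        push_cast [Nat.cast_sub this]
        ring
      · have h := hdArr hS i (by omega)
        rw [hd i hi1 hi] at h
        linarith
    constructor
    · have h := hF (e - 1) le_rfl
      have he1 : e - (e - 1) = 1 := by omega
      rw [he1, pow_one] at h
      linarith [h]
    · intro i hi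
      have h1 := hF i (by omega)
      have h2 := hF (i + 1) (by omega)
      have h3 := hrecZ i
      have hee : e - i = (e - (i + 1)) + 1 := by omega
      rw [hee, pow_succ] at h1
      linear_combination h1 - (p : ℤ) * h2 - h3
  · rintro ⟨h1, h2⟩
    -- downward induction: A (e-1-k) = r (p^(k+1) - 1) - d (e-1-k)
    have hG : ∀ k, k ≤ e - 1 → ((∑ j, a j / p ^ (e - 1 - k) : ℕ) : ℤ) =
        (r : ℤ) * ((p : ℤ) ^ (k + 1) - 1) - d (e - 1 - k) := by
      intro k
      induction k with
      | zero =>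
        intro _
        simpa [pow_one] using h1
      | succ k ih =>
        intro hk
        have hA' := ih (by omega)
        have hi1 : e - 1 - k = (e - 1 - (k + 1)) + 1 := by omega
        rw [hi1] at hA'
        have h2i := h2 (e - 1 - (k + 1)) (by omega)
        have h3 := hrecZ (e - 1 - (k + 1))
        linear_combination h3 + (p : ℤ) * hA' + h2i
    have hG0 := hG (e - 1) le_rfl
    have h00 : e - 1 - (e - 1) = 0 := by omega
    have hke : e - 1 + 1 = e := by omega
    rw [h00, hke, hd0] at hG0
    simp only [pow_zero, Nat.div_one, sub_zero] at hG0
    have hS : ∑ j, a j = r * (p ^ e - 1) := by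
      have hle : 1 ≤ p ^ e := Nat.one_le_pow _ _ hp0
      have : ((r * (p ^ e - 1) : ℕ) : ℤ) = (r : ℤ) * ((p : ℤ) ^ e - 1) := by
        push_cast [Nat.cast_sub hle]; ring
      exact_mod_cast hG0.trans this.symm
    refine ⟨hS, fun i hi1 hi2 => ?_⟩
    have h := hdArr hS i (by omega)
    have hk := hG (e - 1 - i) (by omega)
    have hk1 : e - 1 - (e - 1 - i) = i := by omega
    have hk2 : e - 1 - i + 1 = e - i := by omega
    rw [hk1, hk2] at hk
    rw [h, hk]
    ring
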